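/- If λ < λ₀ then for an attractive potential, G_λ(0) = Σ_{γ: 0→0} exp(−Φ(γ) − λ|γ|) = ∞, and consequently G_λ(x) = ∞ for every x ∈ ℤ^d, since G_λ(x) ≥ H_λ(x) G_λ(0) where H_λ(x) > 0 is the contribution of paths from 0 to x stopped upon first arrival at x. -/

import Mathlib

open Finset Filter
open scoped ENNReal

/-- A step of the nearest-neighbor walk on `ℤ^d`: a coordinate direction and a sign. -/
def step (d : ℕ) (s : Fin d × Bool) : Fin d → ℤ :=
  fun j => if j = s.1 then (if s.2 then 1 else -1) else 0

/-- Position after `k` steps of the path encoded by the step sequence `ω` (starting at `0`). -/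
def pathPos {d n : ℕ} (ω : Fin n → Fin d × Bool) (k : ℕ) : Fin d → ℤ :=
  ∑ i ∈ Finset.range k, if h : i < n then step d (ω ⟨i, h⟩) else 0

/-- Local time of the path at the vertex `x`: number of indices `0 ≤ k ≤ n` with `γ(k) = x`. -/
def locTime {d n : ℕ} (ω : Fin n → Fin d × Bool) (x : Fin d → ℤ) : ℕ :=
  ((Finset.range (n + 1)).filter fun k => pathPos ω k = x).card

/-- Internal energy `Φ(γ) = ∑_x φ(ℓ_x(γ))` (only visited vertices contribute when `φ 0 = 0`). -/
noncomputable def energy {d n : ℕ} (φ : ℕ → ℝ) (ω : Fin n → Fin d × Bool) : ℝ :=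
  ∑ x ∈ (Finset.range (n + 1)).image (pathPos ω), φ (locTime ω x)

/-- Partition function of length-`n` nearest-neighbor paths on `ℤ^d` starting at the origin. -/
noncomputable def Zpart (d : ℕ) (φ : ℕ → ℝ) (n : ℕ) : ℝ :=
  ∑ ω : Fin n → Fin d × Bool, Real.exp (-(energy φ ω))


/-- Two-point function with values in `ℝ≥0∞`, allowing it to be infinite:
`G_λ(x) = ∑_{γ:0→x} exp(−Φ(γ) − λ|γ|)`. -/
noncomputable def Gtop (d : ℕ) (φ : ℕ → ℝ) (lam : ℝ) (x : Fin d → ℤ) : ℝ≥0∞ :=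
  ∑' n : ℕ, ∑ ω : Fin n → Fin d × Bool,
    if pathPos ω n = x then ENNReal.ofReal (Real.exp (-(energy φ ω) - lam * n)) else 0

section basics
variable {d n m : ℕ}

lemma pathPos_zero (ω : Fin n → Fin d × Bool) : pathPos ω 0 = 0 := by
  simp [pathPos]

lemma pathPos_succ (ω : Fin n → Fin d × Bool) (k : ℕ) :
    pathPos ω (k + 1) = pathPos ω k + if h : k < n then step d (ω ⟨k, h⟩) else 0 := by
  simp [pathPos, Finset.sum_range_succ]

lemma step_not (s : Fin d × Bool) : step d (s.1, !s.2) = -step d s := by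
  funext j
  simp only [step, Pi.neg_apply]
  by_cases h : j = s.1 <;> cases s.2 <;> simp [h]

/-- Concatenation of two step sequences. -/
def cat (ω₁ : Fin n → Fin d × Bool) (ω₂ : Fin m → Fin d × Bool) : Fin (n + m) → Fin d × Bool :=
  fun i => if h : (i : ℕ) < n then ω₁ ⟨i, h⟩ else ω₂ ⟨(i : ℕ) - n, by omega⟩

lemma pathPos_cat_left (ω₁ : Fin n → Fin d × Bool) (ω₂ : Fin m → Fin d × Bool)
    {k : ℕ} (hk : k ≤ n) : pathPos (cat ω₁ ω₂) k = pathPos ω₁ k := by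
  unfold pathPos
  refine Finset.sum_congr rfl fun i hi => ?_
  rw [Finset.mem_range] at hi
  have h1 : i < n := lt_of_lt_of_le hi hk
  have h2 : i < n + m := by omega
  rw [dif_pos h1, dif_pos h2]
  simp [cat, h1]

lemma pathPos_cat_right (ω₁ : Fin n → Fin d × Bool) (ω₂ : Fin m → Fin d × Bool)
    {j : ℕ} (hj : j ≤ m) : pathPos (cat ω₁ ω₂) (n + j) = pathPos ω₁ n + pathPos ω₂ j := by
  induction j with
  | zero => simp [pathPos_cat_left ω₁ ω₂ le_rfl, pathPos_zero]
  | succ j ih =>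
    have hj' : j ≤ m := by omega
    have h1 : n + j < n + m := by omega
    have h2 : j < m := by omega
    rw [show n + (j + 1) = (n + j) + 1 by ring, pathPos_succ, ih hj', dif_pos h1,
      pathPos_succ, dif_pos h2]
    have : cat ω₁ ω₂ ⟨n + j, h1⟩ = ω₂ ⟨j, h2⟩ := by simp [cat]
    rw [this, add_assoc]

/-- Time-reversal of a step sequence. -/
def rev (ω : Fin n → Fin d × Bool) : Fin n → Fin d × Bool :=
  fun i => ((ω ⟨n - 1 - (i : ℕ), by omega⟩).1, !(ω ⟨n - 1 - (i : ℕ), by omega⟩).2)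

lemma rev_rev (ω : Fin n → Fin d × Bool) : rev (rev ω) = ω := by
  funext i
  have hi : (i : ℕ) < n := i.isLt
  simp only [rev]
  have : n - 1 - (n - 1 - (i : ℕ)) = (i : ℕ) := by omega
  simp [this]

lemma pathPos_rev (ω : Fin n → Fin d × Bool) {j : ℕ} (hj : j ≤ n) :
    pathPos (rev ω) j = pathPos ω (n - j) - pathPos ω n := by
  induction j with
  | zero => simp [pathPos_zero]
  | succ j ih =>
    have hj' : j ≤ n := by omega
    have h1 : j < n := by omega
    rw [pathPos_succ, ih hj', dif_pos h1]
    have hr : rev ω ⟨j, h1⟩ = ((ω ⟨n - 1 - j, by omega⟩).1, !(ω ⟨n - 1 - j, by omega⟩).2) := rfl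
    rw [hr, step_not]
    have hnj : n - j = (n - 1 - j) + 1 := by omega
    have h2 : n - 1 - j < n := by omega
    have := pathPos_succ ω (n - 1 - j)
    rw [dif_pos h2] at this
    rw [hnj, this] at *
    have hm : n - (j+1) = n - 1 - j := by omega
    rw [hm]
    abel

end basics

section loc
variable {d n m : ℕ}

lemma locTime_eq_zero {ω : Fin n → Fin d × Bool} {x : Fin d → ℤ}
    (hx : x ∉ (Finset.range (n + 1)).image (pathPos ω)) : locTime ω x = 0 := by
  rw [locTime, Finset.card_eq_zero, Finset.filter_eq_empty_iff]
  intro k hk h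
  exact hx (Finset.mem_image.2 ⟨k, hk, h⟩)

lemma phi_nonneg {φ : ℕ → ℝ} (hφ0 : φ 0 = 0) (hmono : Monotone φ) (ℓ : ℕ) : 0 ≤ φ ℓ := by
  rw [← hφ0]; exact hmono (Nat.zero_le ℓ)

/-- Generic splitting bound: if a path of length `n + m` follows `ω₁`'s positions for the
first `n` steps and afterwards visits positions of `ω₂` (via an injective time change `σ`),
then its local times are bounded by the sums of local times. -/
lemma locTime_split_le (ω : Fin (n + m) → Fin d × Bool) (ω₁ : Fin n → Fin d × Bool)
    (ω₂ : Fin m → Fin d × Bool) (σ : ℕ → ℕ)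
    (h1 : ∀ k ≤ n, pathPos ω k = pathPos ω₁ k)
    (hσle : ∀ j ∈ Finset.Icc 1 m, σ j ≤ m)
    (hσinj : Set.InjOn σ (Finset.Icc 1 m))
    (hpos : ∀ j ∈ Finset.Icc 1 m, pathPos ω (n + j) = pathPos ω₂ (σ j))
    (x : Fin d → ℤ) : locTime ω x ≤ locTime ω₁ x + locTime ω₂ x := by
  classical
  have hsub : (Finset.range (n + m + 1)).filter (fun k => pathPos ω k = x) ⊆
      ((Finset.range (n + 1)).filter (fun k => pathPos ω k = x)) ∪
      ((Finset.Icc (n + 1) (n + m)).filter (fun k => pathPos ω k = x)) := by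
    intro k hk
    simp only [Finset.mem_filter, Finset.mem_range, Finset.mem_union, Finset.mem_Icc] at hk ⊢
    obtain ⟨hk1, hk2⟩ := hk
    by_cases h : k ≤ n
    · exact Or.inl ⟨by omega, hk2⟩
    · exact Or.inr ⟨⟨by omega, by omega⟩, hk2⟩
  have hc : locTime ω x ≤
      (((Finset.range (n + 1)).filter (fun k => pathPos ω k = x)).card +
       ((Finset.Icc (n + 1) (n + m)).filter (fun k => pathPos ω k = x)).card) :=
    le_trans (Finset.card_le_card hsub) (Finset.card_union_le _ _)
  refine le_trans hc (Nat.add_le_add ?_ ?_)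
  · apply le_of_eq
    rw [locTime]
    congr 1
    refine Finset.filter_congr fun k hk => ?_
    rw [Finset.mem_range] at hk
    rw [h1 k (by omega)]
  · rw [locTime]
    refine Finset.card_le_card_of_injOn (fun k => σ (k - n)) ?_ ?_
    · intro k hk
      simp only [Finset.mem_coe, Finset.mem_filter, Finset.mem_Icc] at hk
      obtain ⟨⟨hk1, hk2⟩, hk3⟩ := hk
      have hj : k - n ∈ Finset.Icc 1 m := by simp only [Finset.mem_Icc]; omega
      simp only [Finset.mem_coe, Finset.mem_filter, Finset.mem_range]
      constructor
      · have := hσle _ hj; omega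
      · rw [← hpos _ hj, show n + (k - n) = k by omega, hk3]
    · intro a ha b hb hab
      simp only [Finset.coe_filter, Set.mem_setOf_eq, Finset.mem_Icc] at ha hb
      have ha' : a - n ∈ (Finset.Icc 1 m : Finset ℕ) := by simp only [Finset.mem_Icc]; omega
      have hb' : b - n ∈ (Finset.Icc 1 m : Finset ℕ) := by simp only [Finset.mem_Icc]; omega
      have := hσinj ha' hb' hab
      omega

lemma energy_split_le {φ : ℕ → ℝ} (hφ0 : φ 0 = 0) (hmono : Monotone φ)
    (hsub : ∀ ℓ₁ ℓ₂ : ℕ, φ (ℓ₁ + ℓ₂) ≤ φ ℓ₁ + φ ℓ₂)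
    (ω : Fin (n + m) → Fin d × Bool) (ω₁ : Fin n → Fin d × Bool)
    (ω₂ : Fin m → Fin d × Bool) (σ : ℕ → ℕ)
    (h1 : ∀ k ≤ n, pathPos ω k = pathPos ω₁ k)
    (hσle : ∀ j ∈ Finset.Icc 1 m, σ j ≤ m)
    (hσinj : Set.InjOn σ (Finset.Icc 1 m))
    (hpos : ∀ j ∈ Finset.Icc 1 m, pathPos ω (n + j) = pathPos ω₂ (σ j)) :
    energy φ ω ≤ energy φ ω₁ + energy φ ω₂ := by
  classical
  set I := (Finset.range (n + m + 1)).image (pathPos ω) with hI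
  set I₁ := (Finset.range (n + 1)).image (pathPos ω₁) with hI₁
  set I₂ := (Finset.range (m + 1)).image (pathPos ω₂) with hI₂
  have himg : I ⊆ I₁ ∪ I₂ := by
    intro x hx
    rw [hI, Finset.mem_image] at hx
    obtain ⟨k, hk, hkx⟩ := hx
    rw [Finset.mem_range] at hk
    rw [Finset.mem_union]
    by_cases hkn : k ≤ n
    · left
      exact Finset.mem_image.2 ⟨k, Finset.mem_range.2 (by omega), by rw [← h1 k hkn, hkx]⟩
    · right
      have hj : k - n ∈ Finset.Icc 1 m := by simp only [Finset.mem_Icc]; omega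
      refine Finset.mem_image.2 ⟨σ (k - n), Finset.mem_range.2 ?_, ?_⟩
      · have := hσle _ hj; omega
      · rw [← hpos _ hj, show n + (k - n) = k by omega, hkx]
  have hloc := locTime_split_le ω ω₁ ω₂ σ h1 hσle hσinj hpos
  have step1 : energy φ ω ≤ ∑ x ∈ I, (φ (locTime ω₁ x) + φ (locTime ω₂ x)) := by
    refine Finset.sum_le_sum fun x _ => ?_
    exact le_trans (hmono (hloc x)) (hsub _ _)
  have step2 : ∑ x ∈ I, (φ (locTime ω₁ x) + φ (locTime ω₂ x)) ≤
      ∑ x ∈ I₁ ∪ I₂, (φ (locTime ω₁ x) + φ (locTime ω₂ x)) := by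
    refine Finset.sum_le_sum_of_subset_of_nonneg himg fun x _ _ => ?_
    exact add_nonneg (phi_nonneg hφ0 hmono _) (phi_nonneg hφ0 hmono _)
  have e1 : ∑ x ∈ I₁ ∪ I₂, φ (locTime ω₁ x) = energy φ ω₁ := by
    rw [energy]
    refine (Finset.sum_subset Finset.subset_union_left fun x _ hx => ?_).symm
    rw [locTime_eq_zero hx, hφ0]
  have e2 : ∑ x ∈ I₁ ∪ I₂, φ (locTime ω₂ x) = energy φ ω₂ := by
    rw [energy]
    refine (Finset.sum_subset Finset.subset_union_right fun x _ hx => ?_).symm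
    rw [locTime_eq_zero hx, hφ0]
  have step3 : ∑ x ∈ I₁ ∪ I₂, (φ (locTime ω₁ x) + φ (locTime ω₂ x)) =
      energy φ ω₁ + energy φ ω₂ := by
    rw [Finset.sum_add_distrib, e1, e2]
  linarith

end loc

section box
variable {d n : ℕ}

lemma abs_pathPos_le (ω : Fin n → Fin d × Bool) (k : ℕ) (j : Fin d) :
    |pathPos ω k j| ≤ (k : ℤ) := by
  induction k with
  | zero => simp [pathPos_zero]
  | succ k ih =>
    rw [pathPos_succ]
    have hstep : ∀ v : Fin d → ℤ, (|v j| ≤ 1) → |(pathPos ω k + v) j| ≤ (k : ℤ) + 1 := by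
      intro v hv
      calc |(pathPos ω k + v) j| = |pathPos ω k j + v j| := by rfl
        _ ≤ |pathPos ω k j| + |v j| := abs_add_le _ _
        _ ≤ (k : ℤ) + 1 := add_le_add ih hv
    push_cast
    split
    · refine hstep _ ?_
      simp only [step]
      split_ifs <;> simp
    · refine hstep _ ?_; simp
  
/-- The box containing all endpoints of length-`n` paths. -/
noncomputable def endBox (d n : ℕ) : Finset (Fin d → ℤ) :=
  Fintype.piFinset fun _ : Fin d => Finset.Icc (-(n : ℤ)) n

lemma pathPos_mem_box (ω : Fin n → Fin d × Bool) (k : ℕ) (hk : k ≤ n) :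
    pathPos ω k ∈ endBox d n := by
  rw [endBox, Fintype.mem_piFinset]
  intro j
  rw [Finset.mem_Icc, ← abs_le]
  calc |pathPos ω k j| ≤ (k : ℤ) := abs_pathPos_le ω k j
    _ ≤ (n : ℤ) := by exact_mod_cast hk

lemma card_box : (endBox d n).card = (2 * n + 1) ^ d := by
  rw [endBox, Fintype.card_piFinset]
  have : (Finset.Icc (-(n : ℤ)) n).card = 2 * n + 1 := by
    rw [Int.card_Icc]
    omega
  simp [this]

end box

lemma exists_path (d : ℕ) (x : Fin d → ℤ) :
    ∃ (m : ℕ) (δ : Fin m → Fin d × Bool), pathPos δ m = x := by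
  suffices H : ∀ (N : ℕ) (x : Fin d → ℤ), (∑ j, (x j).natAbs) = N →
      ∃ (m : ℕ) (δ : Fin m → Fin d × Bool), pathPos δ m = x by
    exact H _ x rfl
  intro N
  induction N with
  | zero =>
    intro x hx
    refine ⟨0, fun i => i.elim0, ?_⟩
    rw [pathPos_zero]
    funext j
    have : (x j).natAbs = 0 := by
      by_contra h
      have : 0 < ∑ j, (x j).natAbs :=
        Finset.sum_pos' (fun _ _ => Nat.zero_le _) ⟨j, Finset.mem_univ j, Nat.pos_of_ne_zero h⟩
      omega
    exact (Int.natAbs_eq_zero.mp this).symm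
  | succ N ih =>
    intro x hx
    have hj : ∃ j, x j ≠ 0 := by
      by_contra h
      push_neg at h
      simp [h] at hx
    obtain ⟨j, hj⟩ := hj
    set b : Bool := decide (0 < x j) with hb
    set e : ℤ := if b then 1 else -1 with he
    set x' : Fin d → ℤ := fun i => if i = j then x j - e else x i with hx'
    have hx'sum : (∑ i, (x' i).natAbs) = N := by
      have hsplit : ∀ i, (x i).natAbs = (x' i).natAbs + (if i = j then 1 else 0) := by
        intro i
        by_cases hij : i = j
        · subst hij
          simp only [hx', if_pos rfl, he, hb]
          by_cases hpos : 0 < x i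
          · simp only [decide_eq_true hpos, if_pos, if_true, eq_self_iff_true]
            omega
          · simp only [decide_eq_false (by omega : ¬ 0 < x i), Bool.false_eq_true, if_false,
              if_true, eq_self_iff_true]
            omega
        · simp [hx', hij]
      have hsum : ∑ i, (x i).natAbs = (∑ i, (x' i).natAbs) + 1 := by
        calc ∑ i, (x i).natAbs
            = ∑ i, ((x' i).natAbs + (if i = j then 1 else 0)) :=
              Finset.sum_congr rfl fun i _ => hsplit i
          _ = (∑ i, (x' i).natAbs) + ∑ i, (if i = j then 1 else 0) := Finset.sum_add_distrib
          _ = (∑ i, (x' i).natAbs) + 1 := by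
              rw [Finset.sum_ite_eq' Finset.univ j (fun _ => 1)]
              simp
      omega
    obtain ⟨m, δ, hδ⟩ := ih x' hx'sum
    refine ⟨m + 1, cat δ (fun _ : Fin 1 => (j, b)), ?_⟩
    rw [pathPos_cat_right δ _ (le_refl 1), hδ]
    have h1 : pathPos (fun _ : Fin 1 => (j, b)) 1 = step d (j, b) := by
      rw [show (1 : ℕ) = 0 + 1 from rfl, pathPos_succ, pathPos_zero, dif_pos Nat.zero_lt_one,
        zero_add]
    rw [h1]
    funext i
    by_cases hij : i = j
    · subst hij
      simp [hx', step, he]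
    · simp [hx', step, hij]

noncomputable def Zend (d : ℕ) (φ : ℕ → ℝ) (n : ℕ) (y : Fin d → ℤ) : ℝ :=
  ∑ ω : Fin n → Fin d × Bool, if pathPos ω n = y then Real.exp (-(energy φ ω)) else 0

section sums
variable {d : ℕ} (φ : ℕ → ℝ)

lemma Zend_nonneg (n : ℕ) (y : Fin d → ℤ) : 0 ≤ Zend d φ n y := by
  refine Finset.sum_nonneg fun ω _ => ?_
  split
  · exact (Real.exp_pos _).le
  · exact le_rfl

lemma Zpart_eq_sum_Zend (n : ℕ) : Zpart d φ n = ∑ y ∈ endBox d n, Zend d φ n y := by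
  simp only [Zpart, Zend]
  rw [Finset.sum_comm]
  refine Finset.sum_congr rfl fun ω _ => ?_
  rw [Finset.sum_ite_eq (endBox d n) (pathPos ω n) (fun _ => Real.exp (-(energy φ ω)))]
  rw [if_pos (pathPos_mem_box ω n le_rfl)]

lemma endBox_nonempty (n : ℕ) : (endBox d n).Nonempty := by
  refine ⟨0, ?_⟩
  rw [endBox, Fintype.mem_piFinset]
  intro j
  simp

lemma exists_good_endpoint (n : ℕ) :
    ∃ y, Zpart d φ n / ((2 * (n : ℝ) + 1) ^ d) ≤ Zend d φ n y := by
  have hcard : ((endBox d n).card : ℝ) = (2 * (n : ℝ) + 1) ^ d := by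
    rw [card_box]; push_cast; ring
  have hpos : (0 : ℝ) < (2 * (n : ℝ) + 1) ^ d := by positivity
  have hsum : ∑ _y ∈ endBox d n, (Zpart d φ n / ((2 * (n : ℝ) + 1) ^ d)) ≤
      ∑ y ∈ endBox d n, Zend d φ n y := by
    rw [Finset.sum_const, nsmul_eq_mul, hcard, mul_div_cancel₀ _ (ne_of_gt hpos)]
    exact le_of_eq (Zpart_eq_sum_Zend φ n)
  obtain ⟨y, _, hy⟩ := Finset.exists_le_of_sum_le (endBox_nonempty n) hsum
  exact ⟨y, hy⟩

lemma loop_lower (hφ0 : φ 0 = 0) (hmono : Monotone φ)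
    (hsub : ∀ ℓ₁ ℓ₂ : ℕ, φ (ℓ₁ + ℓ₂) ≤ φ ℓ₁ + φ ℓ₂) (n : ℕ) (y : Fin d → ℤ) :
    (Zend d φ n y) ^ 2 ≤ Zend d φ (n + n) 0 := by
  classical
  set S₁ := (Finset.univ : Finset ((Fin n → Fin d × Bool) × (Fin n → Fin d × Bool))).filter
    (fun p => pathPos p.1 n = y ∧ pathPos p.2 n = y) with hS₁
  have hsq : (Zend d φ n y) ^ 2 =
      ∑ p ∈ S₁, Real.exp (-(energy φ p.1)) * Real.exp (-(energy φ p.2)) := by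
    rw [sq, Zend, Finset.sum_mul_sum, hS₁, Finset.sum_filter, ← Finset.univ_product_univ,
      Finset.sum_product]
    refine Finset.sum_congr rfl fun ω₁ _ => Finset.sum_congr rfl fun ω₂ _ => ?_
    split_ifs <;> simp_all
  set Ψ : ((Fin n → Fin d × Bool) × (Fin n → Fin d × Bool)) → (Fin (n + n) → Fin d × Bool) :=
    fun p => cat p.1 (rev p.2) with hΨ
  have key1 : ∀ p ∈ S₁, energy φ (Ψ p) ≤ energy φ p.1 + energy φ p.2 := by
    intro p hp
    rw [hS₁, Finset.mem_filter] at hp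
    obtain ⟨-, h1, h2⟩ := hp
    refine energy_split_le hφ0 hmono hsub _ p.1 p.2 (fun j => n - j)
      (fun k hk => pathPos_cat_left _ _ hk)
      (fun j hj => by simp only [Finset.mem_Icc] at hj; show n - j ≤ n; omega)
      (fun a ha b hb hab => by
        simp only [Finset.coe_Icc, Set.mem_Icc] at ha hb
        have hab' : n - a = n - b := hab
        omega)
      (fun j hj => ?_)
    simp only [Finset.mem_Icc] at hj
    rw [pathPos_cat_right _ _ (hj.2), pathPos_rev _ hj.2, h1, h2]
    abel
  have key2 : ∀ p ∈ S₁, pathPos (Ψ p) (n + n) = 0 := by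
    intro p hp
    rw [hS₁, Finset.mem_filter] at hp
    obtain ⟨-, h1, h2⟩ := hp
    rw [hΨ, pathPos_cat_right _ _ le_rfl, pathPos_rev _ le_rfl, h1, h2, Nat.sub_self,
      pathPos_zero]
    abel
  have hinj : ∀ p₁ ∈ S₁, ∀ p₂ ∈ S₁, Ψ p₁ = Ψ p₂ → p₁ = p₂ := by
    intro p₁ _ p₂ _ h
    have hfst : p₁.1 = p₂.1 := by
      funext i
      have := congrFun h ⟨(i : ℕ), by omega⟩
      simpa [hΨ, cat, i.isLt] using this
    have hrev : rev p₁.2 = rev p₂.2 := by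
      funext i
      have := congrFun h ⟨n + (i : ℕ), by omega⟩
      have hni : ¬ (n + (i : ℕ) < n) := by omega
      simpa [hΨ, cat, hni] using this
    have hsnd : p₁.2 = p₂.2 := by
      have := congrArg rev hrev
      rwa [rev_rev, rev_rev] at this
    exact Prod.ext hfst hsnd
  rw [hsq]
  calc ∑ p ∈ S₁, Real.exp (-(energy φ p.1)) * Real.exp (-(energy φ p.2))
      ≤ ∑ p ∈ S₁, Real.exp (-(energy φ (Ψ p))) := by
        refine Finset.sum_le_sum fun p hp => ?_
        rw [← Real.exp_add]
        exact Real.exp_le_exp.2 (by linarith [key1 p hp])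
    _ = ∑ q ∈ S₁.image Ψ, Real.exp (-(energy φ q)) := (Finset.sum_image (f := fun q => Real.exp (-(energy φ q))) hinj).symm
    _ ≤ ∑ q ∈ Finset.univ.filter (fun q => pathPos q (n + n) = 0),
          Real.exp (-(energy φ q)) := by
        refine Finset.sum_le_sum_of_subset_of_nonneg ?_ (fun q _ _ => (Real.exp_pos _).le)
        intro q hq
        rw [Finset.mem_image] at hq
        obtain ⟨p, hp, rfl⟩ := hq
        exact Finset.mem_filter.2 ⟨Finset.mem_univ _, key2 p hp⟩
    _ = Zend d φ (n + n) 0 := by rw [Zend, Finset.sum_filter]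

end sums

section analysis
variable {d : ℕ} (φ : ℕ → ℝ)

lemma Zpart_pos (hd : 0 < d) (n : ℕ) : 0 < Zpart d φ n := by
  have : Nonempty (Fin n → Fin d × Bool) := ⟨fun _ => (⟨0, hd⟩, true)⟩
  exact Finset.sum_pos (fun _ _ => Real.exp_pos _) Finset.univ_nonempty

lemma tendsto_A (ε : ℝ) (hε : 0 < ε) :
    Tendsto (fun n : ℕ => Real.exp (ε * n) / (2 * (n : ℝ) + 1) ^ d) atTop atTop := by
  have hg : Tendsto (fun x : ℝ => Real.exp x / x ^ d) atTop atTop :=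
    Real.tendsto_exp_div_pow_atTop d
  have hεn : Tendsto (fun n : ℕ => ε * (n : ℝ)) atTop atTop :=
    Tendsto.const_mul_atTop hε tendsto_natCast_atTop_atTop
  have hcomp : Tendsto (fun n : ℕ => Real.exp (ε * n) / (ε * n) ^ d) atTop atTop :=
    hg.comp hεn
  have hconst : Tendsto (fun n : ℕ => (ε / 3) ^ d * (Real.exp (ε * n) / (ε * n) ^ d))
      atTop atTop :=
    Tendsto.const_mul_atTop (by positivity) hcomp
  refine tendsto_atTop_mono' atTop ?_ hconst
  filter_upwards [eventually_ge_atTop 1] with n hn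
  have hn0 : (0 : ℝ) < n := by exact_mod_cast hn
  have key : (ε / 3) ^ d * (Real.exp (ε * n) / (ε * n) ^ d) = Real.exp (ε * n) / (3 * n) ^ d := by
    rw [div_pow, mul_pow, mul_pow]
    field_simp
  rw [key]
  have hn1 : (1 : ℝ) ≤ n := by exact_mod_cast hn
  gcongr
  linarith

lemma loop_unbounded (hd : 0 < d) (hφ0 : φ 0 = 0) (hmono : Monotone φ)
    (hsub : ∀ ℓ₁ ℓ₂ : ℕ, φ (ℓ₁ + ℓ₂) ≤ φ ℓ₁ + φ ℓ₂) (lam0 : ℝ)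
    (hlam0 : Tendsto (fun n : ℕ => Real.log (Zpart d φ n) / (n : ℝ)) atTop (nhds lam0))
    (lam : ℝ) (hlam : lam < lam0) (M : ℝ) :
    ∃ n : ℕ, M ≤ Real.exp (-(lam * ((n : ℝ) + n))) * Zend d φ (n + n) 0 := by
  set ε := (lam0 - lam) / 2 with hε
  have hεpos : 0 < ε := by simp only [hε]; linarith
  have E1 : ∀ᶠ n : ℕ in atTop, lam + ε < Real.log (Zpart d φ n) / n :=
    hlam0.eventually (eventually_gt_nhds (by simp only [hε]; linarith))
  have E2 : ∀ᶠ n : ℕ in atTop,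
      Real.exp (ε * n) ≤ Real.exp (-(lam * n)) * Zpart d φ n := by
    filter_upwards [E1, eventually_ge_atTop 1] with n h1 hn1
    have hn0 : (0 : ℝ) < n := by exact_mod_cast hn1
    have hlog : (lam + ε) * n < Real.log (Zpart d φ n) := (lt_div_iff₀ hn0).1 h1
    calc Real.exp (ε * n) = Real.exp (-(lam * n) + (lam + ε) * n) := by ring_nf
      _ ≤ Real.exp (-(lam * n) + Real.log (Zpart d φ n)) :=
          Real.exp_le_exp.2 (by linarith)
      _ = Real.exp (-(lam * n)) * Zpart d φ n := by
          rw [Real.exp_add, Real.exp_log (Zpart_pos φ hd n)]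
  have hev := (E2.and ((tendsto_A (d := d) ε hεpos).eventually_ge_atTop (max M 1))).exists
  obtain ⟨n, h2, hA⟩ := hev
  obtain ⟨y, hy⟩ := exists_good_endpoint φ n
  set c := (2 * (n : ℝ) + 1) ^ d with hc
  have hcpos : (0 : ℝ) < c := by positivity
  set A := Real.exp (ε * n) / c with hAdef
  have hA1 : 1 ≤ A := le_trans (le_max_right _ _) hA
  have hMA : M ≤ A := le_trans (le_max_left _ _) hA
  have hAA : A ≤ A ^ 2 := by nlinarith
  set B := Real.exp (-(lam * n)) * Zpart d φ n / c with hB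
  have hAB : A ≤ B := by
    rw [hAdef, hB]
    gcongr
  have hA0 : 0 ≤ A := by linarith
  have hB2 : A ^ 2 ≤ B ^ 2 := pow_le_pow_left₀ hA0 hAB 2
  have hexp2 : Real.exp (-(lam * n)) ^ 2 = Real.exp (-(lam * ((n : ℝ) + n))) := by
    rw [sq, ← Real.exp_add]
    congr 1
    ring
  have hy0 : 0 ≤ Zpart d φ n / c := le_of_lt (div_pos (Zpart_pos φ hd n) hcpos)
  have hsq : (Zpart d φ n / c) ^ 2 ≤ Zend d φ (n + n) 0 :=
    le_trans (pow_le_pow_left₀ hy0 hy 2) (loop_lower φ hφ0 hmono hsub n y)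
  have hBsq : B ^ 2 ≤ Real.exp (-(lam * ((n : ℝ) + n))) * Zend d φ (n + n) 0 := by
    have hBeq : B ^ 2 = Real.exp (-(lam * ((n : ℝ) + n))) * (Zpart d φ n / c) ^ 2 := by
      rw [hB, mul_div_assoc, mul_pow, hexp2]
    rw [hBeq]
    exact mul_le_mul_of_nonneg_left hsq (Real.exp_pos _).le
  exact ⟨n, by linarith⟩

end analysis

section final
variable {d : ℕ} (φ : ℕ → ℝ)

lemma append_bound (hφ0 : φ 0 = 0) (hmono : Monotone φ)
    (hsub : ∀ ℓ₁ ℓ₂ : ℕ, φ (ℓ₁ + ℓ₂) ≤ φ ℓ₁ + φ ℓ₂) {N m : ℕ}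
    (δ : Fin m → Fin d × Bool) (x : Fin d → ℤ) (hδ : pathPos δ m = x) (t : ℝ) :
    ∑ γ : Fin N → Fin d × Bool,
        (if pathPos γ N = 0 then Real.exp (-(energy φ γ) - energy φ δ - t) else 0) ≤
    ∑ ω : Fin (N + m) → Fin d × Bool,
        (if pathPos ω (N + m) = x then Real.exp (-(energy φ ω) - t) else 0) := by
  classical
  rw [← Finset.sum_filter, ← Finset.sum_filter]
  set S₁ := (Finset.univ : Finset (Fin N → Fin d × Bool)).filter (fun γ => pathPos γ N = 0)
    with hS₁
  set Ψ : (Fin N → Fin d × Bool) → (Fin (N + m) → Fin d × Bool) := fun γ => cat γ δ with hΨ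
  have key1 : ∀ γ ∈ S₁, energy φ (Ψ γ) ≤ energy φ γ + energy φ δ := by
    intro γ hγ
    rw [hS₁, Finset.mem_filter] at hγ
    refine energy_split_le hφ0 hmono hsub _ γ δ id
      (fun k hk => pathPos_cat_left _ _ hk)
      (fun j hj => by simp only [Finset.mem_Icc] at hj; exact hj.2)
      (fun a _ b _ hab => hab)
      (fun j hj => ?_)
    simp only [Finset.mem_Icc] at hj
    rw [pathPos_cat_right _ _ hj.2, hγ.2, zero_add, id]
  have key2 : ∀ γ ∈ S₁, pathPos (Ψ γ) (N + m) = x := by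
    intro γ hγ
    rw [hS₁, Finset.mem_filter] at hγ
    rw [hΨ, pathPos_cat_right _ _ le_rfl, hγ.2, zero_add, hδ]
  have hinj : ∀ γ₁ ∈ S₁, ∀ γ₂ ∈ S₁, Ψ γ₁ = Ψ γ₂ → γ₁ = γ₂ := by
    intro γ₁ _ γ₂ _ h
    funext i
    have := congrFun h ⟨(i : ℕ), by omega⟩
    simpa [hΨ, cat, i.isLt] using this
  calc ∑ γ ∈ S₁, Real.exp (-(energy φ γ) - energy φ δ - t)
      ≤ ∑ γ ∈ S₁, Real.exp (-(energy φ (Ψ γ)) - t) := by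
        refine Finset.sum_le_sum fun γ hγ => ?_
        exact Real.exp_le_exp.2 (by linarith [key1 γ hγ])
    _ = ∑ ω ∈ S₁.image Ψ, Real.exp (-(energy φ ω) - t) :=
        (Finset.sum_image (f := fun ω => Real.exp (-(energy φ ω) - t)) hinj).symm
    _ ≤ ∑ ω ∈ Finset.univ.filter (fun ω => pathPos ω (N + m) = x),
          Real.exp (-(energy φ ω) - t) := by
        refine Finset.sum_le_sum_of_subset_of_nonneg ?_ (fun ω _ _ => (Real.exp_pos _).le)
        intro ω hω
        rw [Finset.mem_image] at hω
        obtain ⟨γ, hγ, rfl⟩ := hω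
        exact Finset.mem_filter.2 ⟨Finset.mem_univ _, key2 γ hγ⟩

theorem main_diverge (hd : 0 < d) (hφ0 : φ 0 = 0) (hmono : Monotone φ)
    (hsub : ∀ ℓ₁ ℓ₂ : ℕ, φ (ℓ₁ + ℓ₂) ≤ φ ℓ₁ + φ ℓ₂) (lam0 : ℝ)
    (hlam0 : Tendsto (fun n : ℕ => Real.log (Zpart d φ n) / (n : ℝ)) atTop (nhds lam0))
    (lam : ℝ) (hlam : lam < lam0) (x : Fin d → ℤ) : Gtop d φ lam x = ⊤ := by
  classical
  obtain ⟨m, δ, hδ⟩ := exists_path d x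
  set cδ := Real.exp (-(energy φ δ) - lam * m) with hcδ
  have hcpos : 0 < cδ := Real.exp_pos _
  refine ENNReal.eq_top_of_forall_nnreal_le fun r => ?_
  obtain ⟨n, hn⟩ := loop_unbounded φ hd hφ0 hmono hsub lam0 hlam0 lam hlam ((r : ℝ) / cδ)
  set N := n + n with hN
  have hr1 : (r : ℝ) ≤ cδ * (Real.exp (-(lam * ((n : ℝ) + n))) * Zend d φ N 0) := by
    rw [← div_le_iff₀' hcpos]
    exact hn
  have hr2 : cδ * (Real.exp (-(lam * ((n : ℝ) + n))) * Zend d φ N 0) =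
      ∑ γ : Fin N → Fin d × Bool,
        (if pathPos γ N = 0 then
          Real.exp (-(energy φ γ) - energy φ δ - lam * ((N + m : ℕ) : ℝ)) else 0) := by
    rw [Zend, Finset.mul_sum, Finset.mul_sum]
    refine Finset.sum_congr rfl fun γ _ => ?_
    split_ifs
    · rw [hcδ, ← Real.exp_add, ← Real.exp_add]
      congr 1
      have : ((N + m : ℕ) : ℝ) = (n : ℝ) + n + m := by rw [hN]; push_cast; ring
      rw [this]
      ring
    · simp
  have key : (r : ℝ) ≤ ∑ ω : Fin (N + m) → Fin d × Bool,
      (if pathPos ω (N + m) = x then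
        Real.exp (-(energy φ ω) - lam * ((N + m : ℕ) : ℝ)) else 0) := by
    refine le_trans (le_trans hr1 (le_of_eq hr2)) ?_
    exact append_bound φ hφ0 hmono hsub δ x hδ _
  have hterm : ENNReal.ofReal (∑ ω : Fin (N + m) → Fin d × Bool,
      (if pathPos ω (N + m) = x then
        Real.exp (-(energy φ ω) - lam * ((N + m : ℕ) : ℝ)) else 0)) ≤ Gtop d φ lam x := by
    rw [ENNReal.ofReal_sum_of_nonneg (fun ω _ => by positivity)]
    have heq : ∀ ω : Fin (N + m) → Fin d × Bool,
        ENNReal.ofReal (if pathPos ω (N + m) = x then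
          Real.exp (-(energy φ ω) - lam * ((N + m : ℕ) : ℝ)) else 0) =
        (if pathPos ω (N + m) = x then
          ENNReal.ofReal (Real.exp (-(energy φ ω) - lam * ((N + m : ℕ) : ℝ))) else 0) := by
      intro ω
      split_ifs <;> simp
    rw [Finset.sum_congr rfl fun ω _ => heq ω]
    exact ENNReal.le_tsum (N + m)
  calc (r : ℝ≥0∞) = ENNReal.ofReal (r : ℝ) := ENNReal.ofReal_coe_nnreal.symm
    _ ≤ _ := le_trans (ENNReal.ofReal_le_ofReal key) hterm

end final

/-- For an attractive potential and `λ < λ₀`, the two-point function diverges at the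
origin, `G_λ(0) = ∞`, and consequently `G_λ(x) = ∞` for every `x ∈ ℤ^d`. -/
theorem two_point_diverges_below_critical (d : ℕ) (hd : 0 < d) (φ : ℕ → ℝ)
    (hφ0 : φ 0 = 0) (hmono : Monotone φ)
    (hsub : ∀ ℓ₁ ℓ₂ : ℕ, φ (ℓ₁ + ℓ₂) ≤ φ ℓ₁ + φ ℓ₂) (lam0 : ℝ)
    (hlam0 : Tendsto (fun n : ℕ => Real.log (Zpart d φ n) / (n : ℝ)) atTop (nhds lam0))
    (lam : ℝ) (hlam : lam < lam0) :
    Gtop d φ lam 0 = ⊤ ∧ ∀ x : Fin d → ℤ, Gtop d φ lam x = ⊤ := by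
  exact ⟨main_diverge φ hd hφ0 hmono hsub lam0 hlam0 lam hlam 0,
    main_diverge φ hd hφ0 hmono hsub lam0 hlam0 lam hlam⟩
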